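/- On S², with Z = x+iy, set Xₙ = Re(Zⁿ) and Yₙ = Im(Zⁿ). Then Γ(z,z) = 1−z², Γ(z,Xₙ) = −n z Xₙ, Γ(z,Yₙ) = −n z Yₙ, Γ(Xₙ,Xₙ) = n²((1−z²)^{n−1} − Xₙ²), Γ(Yₙ,Yₙ) = n²((1−z²)^{n−1} − Yₙ²), and Γ(Xₙ,Yₙ) = −n² Xₙ Yₙ, where all identities hold modulo the relation x²+y²+z² = 1. -/

import Mathlib

open MvPolynomial

/-- The spherical carré du champ operator on polynomials in three variables:
`Γ(f,g) = ∇f·∇g − (x·∇f)(x·∇g)`. -/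
noncomputable def sphGammaC (f g : MvPolynomial (Fin 3) ℂ) : MvPolynomial (Fin 3) ℂ :=
  (∑ i : Fin 3, pderiv i f * pderiv i g)
    - (∑ i : Fin 3, X i * pderiv i f) * (∑ i : Fin 3, X i * pderiv i g)

theorem stmt1 (n : ℕ) (hn : 1 ≤ n) (x y z : ℝ) (h : x ^ 2 + y ^ 2 + z ^ 2 = 1) :
    let Z : MvPolynomial (Fin 3) ℂ := X 0 + C Complex.I * X 1
    let Zb : MvPolynomial (Fin 3) ℂ := X 0 - C Complex.I * X 1
    let Xn : MvPolynomial (Fin 3) ℂ := C (1 / 2 : ℂ) * (Z ^ n + Zb ^ n)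
    let Yn : MvPolynomial (Fin 3) ℂ := C (1 / (2 * Complex.I) : ℂ) * (Z ^ n - Zb ^ n)
    let Pz : MvPolynomial (Fin 3) ℂ := X 2
    let ev : MvPolynomial (Fin 3) ℂ → ℂ := eval ![(x : ℂ), (y : ℂ), (z : ℂ)]
    ev (sphGammaC Pz Pz) = 1 - (z : ℂ) ^ 2 ∧
    ev (sphGammaC Pz Xn) = -(n : ℂ) * (z : ℂ) * ev Xn ∧
    ev (sphGammaC Pz Yn) = -(n : ℂ) * (z : ℂ) * ev Yn ∧
    ev (sphGammaC Xn Xn) = (n : ℂ) ^ 2 * ((1 - (z : ℂ) ^ 2) ^ (n - 1) - (ev Xn) ^ 2) ∧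
    ev (sphGammaC Yn Yn) = (n : ℂ) ^ 2 * ((1 - (z : ℂ) ^ 2) ^ (n - 1) - (ev Yn) ^ 2) ∧
    ev (sphGammaC Xn Yn) = -(n : ℂ) ^ 2 * ev Xn * ev Yn := by
  obtain ⟨m, rfl⟩ : ∃ m, n = m + 1 := ⟨n - 1, by omega⟩
  intro Z Zb Xn Yn Pz ev
  have hab : ((x : ℂ) + Complex.I * y) * ((x : ℂ) - Complex.I * y) = 1 - (z : ℂ) ^ 2 := by
    have h' : (x : ℂ) ^ 2 + (y : ℂ) ^ 2 + (z : ℂ) ^ 2 = 1 := by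
      exact_mod_cast congrArg (Complex.ofReal ·) h
    have := Complex.I_sq
    ring_nf
    ring_nf at h'
    rw [Complex.I_sq]
    linear_combination h'
  simp only [Z, Zb, Xn, Yn, Pz, ev, sphGammaC, Fin.sum_univ_three, pderiv_C_mul, map_add,
    map_sub, pderiv_pow, pderiv_X, Nat.add_sub_cancel]
  norm_num [Fin.ext_iff]
  have hab' : ((x : ℂ) + Complex.I * y) ^ m * ((x : ℂ) - Complex.I * y) ^ m
      = (1 - (z : ℂ) ^ 2) ^ m := by rw [← mul_pow, hab]
  rw [← hab']
  have hv : ![(x : ℂ), (y : ℂ), (z : ℂ)] 2 = (z : ℂ) := rfl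
  refine ⟨by rw [hv]; ring, by rw [hv]; ring, by rw [hv]; ring, ?_, ?_, ?_⟩
  · linear_combination (((m : ℂ) + 1) ^ 2 / 4 *
      (((x : ℂ) + Complex.I * y) ^ m - ((x : ℂ) - Complex.I * y) ^ m) ^ 2) * Complex.I_sq
  · linear_combination (((m : ℂ) + 1) ^ 2 *
      ((((x : ℂ) + Complex.I * y) ^ m + ((x : ℂ) - Complex.I * y) ^ m) ^ 2 * Complex.I ^ 2 / 4
        - ((x : ℂ) + Complex.I * y) ^ m * ((x : ℂ) - Complex.I * y) ^ m)) * Complex.I_sq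
  · linear_combination (-(Complex.I / 4) * ((m : ℂ) + 1) ^ 2 *
      ((((x : ℂ) + Complex.I * y) ^ m) ^ 2 - (((x : ℂ) - Complex.I * y) ^ m) ^ 2)) * Complex.I_sq
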